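/- Under the above setup, for every comparator sequence (P̃_i^{t*}) with P̃_i^{t*} ∈ Ω_i for all i ∈ {1,…,M} and all t ∈ {0,…,T}, and with Σ_{i=1}^M G̃_i^t(P̃_i^{t*}) = 0 for every t ∈ {1,…,T}, the iterates of Algorithm 1 satisfy the dynamic-regret bound: Σ_{t=1}^T Σ_{i=1}^M [C_i^t(P_i^t) − C_i^t(P̃_i^{t*})] ≤ (R/α)·Σ_{t=1}^T Σ_{i=1}^M ‖P̃_i^{t*} − P̃_i^{(t−1)*}‖ + (1/(2α))·Σ_{i=1}^M ‖P_i^1 − P̃_i^{0*}‖² + φ²·M·α·T + (4ψ̃²M/ε̃^{3/2} + 2ψ̃²M)·β·T + (ψ̃²/M)·α·T/θ². -/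

import Mathlib

open scoped RealInnerProductSpace
open Finset

variable {E : Type*} [NormedAddCommGroup E] [InnerProductSpace ℝ E] [CompleteSpace E]

lemma grad_convex_ineq {f : E → ℝ} {g : E}
    (hconv : ConvexOn ℝ Set.univ f) (x y : E) (hg : HasGradientAt f g x) :
    f x - f y ≤ ⟪g, x - y⟫ := by
  have hline : ConvexOn ℝ Set.univ (f ∘ (AffineMap.lineMap x y : ℝ →ᵃ[ℝ] E)) := by
    have := hconv.comp_affineMap (AffineMap.lineMap x y : ℝ →ᵃ[ℝ] E)
    simpa using this
  have hd : HasDerivAt (f ∘ (AffineMap.lineMap x y : ℝ →ᵃ[ℝ] E)) ⟪g, y - x⟫ 0 := by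
    have hF : HasFDerivAt f ((InnerProductSpace.toDual ℝ E) g : E →L[ℝ] ℝ) x := hg.hasFDerivAt
    have hl : HasDerivAt (fun s : ℝ => (AffineMap.lineMap x y : ℝ →ᵃ[ℝ] E) s) (y - x) 0 := by
      have heq : (fun s : ℝ => (AffineMap.lineMap x y : ℝ →ᵃ[ℝ] E) s)
          = fun s : ℝ => s • (y - x) + x := by
        funext s; simp [AffineMap.lineMap_apply_module']
      rw [heq]
      simpa using ((hasDerivAt_id (0:ℝ)).smul_const (y - x)).add_const x
    have h0 : (AffineMap.lineMap x y : ℝ →ᵃ[ℝ] E) 0 = x := by simp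
    have hF' : HasFDerivAt f ((InnerProductSpace.toDual ℝ E) g : E →L[ℝ] ℝ)
        ((AffineMap.lineMap x y : ℝ →ᵃ[ℝ] E) 0) := by rw [h0]; exact hF
    have := hF'.comp_hasDerivAt (0:ℝ) hl
    simpa [InnerProductSpace.toDual_apply_apply] using this
  have hslope := hline.le_slope_of_hasDerivAt (Set.mem_univ (0:ℝ)) (Set.mem_univ (1:ℝ))
    one_pos hd
  have h01 : (f ∘ (AffineMap.lineMap x y : ℝ →ᵃ[ℝ] E)) 0 = f x := by simp
  have h11 : (f ∘ (AffineMap.lineMap x y : ℝ →ᵃ[ℝ] E)) 1 = f y := by simp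
  rw [slope_def_field, h01, h11] at hslope
  have h1 : ⟪g, y - x⟫ ≤ f y - f x := by simpa using hslope
  have h2 : ⟪g, x - y⟫ = -⟪g, y - x⟫ := by
    rw [← inner_neg_right]; congr 1; abel
  linarith [h2.ge, h2.le]

lemma pos_of_Ioc {a b : ℝ} (hb : 0 ≤ b) (h : ∀ s ∈ Set.Ioc (0:ℝ) 1, 0 ≤ a + s * b) :
    0 ≤ a := by
  by_contra hc
  push_neg at hc
  rcases eq_or_lt_of_le hb with hb0 | hb0
  · have := h 1 ⟨one_pos, le_refl _⟩; nlinarith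
  · have hs : (0:ℝ) < min 1 (-a / (2*b)) :=
      lt_min one_pos (div_pos (by linarith) (by linarith))
    have hmem : min 1 (-a / (2*b)) ∈ Set.Ioc (0:ℝ) 1 := ⟨hs, min_le_left _ _⟩
    have h2 := h _ hmem
    have h3 : min 1 (-a / (2*b)) * b ≤ (-a / (2*b)) * b :=
      mul_le_mul_of_nonneg_right (min_le_right _ _) hb
    have h4 : (-a / (2*b)) * b = -a/2 := by
      field_simp
    nlinarith

lemma prox_strong {Ω : Set E} (hconv : Convex ℝ Ω) {α : ℝ} (hα : 0 < α)
    (g p x q : E) (hx : x ∈ Ω) (hq : q ∈ Ω)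
    (hmin : ∀ Q ∈ Ω, ⟪x - p, g⟫ + 1/(2*α) * ‖x - p‖^2 ≤ ⟪Q - p, g⟫ + 1/(2*α) * ‖Q - p‖^2) :
    ⟪g, x - q⟫ ≤ 1/(2*α) * (‖q - p‖^2 - ‖x - p‖^2 - ‖q - x‖^2) := by
  have hα' : α ≠ 0 := ne_of_gt hα
  set c₀ : ℝ := ⟪q - x, g⟫ + (1/α) * ⟪x - p, q - x⟫ with hc₀
  set c₁ : ℝ := 1/(2*α) * ‖q - x‖^2 with hc₁
  have key : 0 ≤ c₀ := by
    apply pos_of_Ioc (b := c₁) (by rw [hc₁]; positivity)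
    intro s hs
    obtain ⟨hs0, hs1⟩ := hs
    have hmem : x + s • (q - x) ∈ Ω := by
      have := hconv hx hq (a := 1 - s) (b := s) (by linarith) (le_of_lt hs0) (by ring)
      convert this using 1
      module
    have h2 := hmin _ hmem
    have e1 : ⟪x + s • (q - x) - p, g⟫ = ⟪x - p, g⟫ + s * ⟪q - x, g⟫ := by
      rw [show x + s • (q - x) - p = (x - p) + s • (q - x) by abel, inner_add_left,
        real_inner_smul_left]
    have e2 : ‖x + s • (q - x) - p‖^2
        = ‖x - p‖^2 + 2 * (s * ⟪x - p, q - x⟫) + s^2 * ‖q - x‖^2 := by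
      rw [show x + s • (q - x) - p = (x - p) + s • (q - x) by abel,
        @norm_add_sq_real, real_inner_smul_right, norm_smul]
      rw [mul_pow, Real.norm_eq_abs, sq_abs]
    rw [e1, e2] at h2
    have expand : (c₀ + s * c₁) * s
        = s * ⟪q - x, g⟫ + 1/(2*α) * (2 * (s * ⟪x - p, q - x⟫) + s^2 * ‖q - x‖^2) := by
      rw [hc₀, hc₁]; field_simp; ring
    have hnn : 0 ≤ (c₀ + s * c₁) * s := by rw [expand]; linarith
    by_contra hneg
    push_neg at hneg
    nlinarith
  have e3 : ‖q - p‖^2 = ‖q - x‖^2 + 2 * ⟪q - x, x - p⟫ + ‖x - p‖^2 := by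
    rw [show q - p = (q - x) + (x - p) by abel, @norm_add_sq_real]
  have e4 : ⟪g, x - q⟫ = -⟪q - x, g⟫ := by
    rw [real_inner_comm, ← inner_neg_left]; congr 1; abel
  have e5 : ⟪x - p, q - x⟫ = ⟪q - x, x - p⟫ := real_inner_comm _ _
  rw [e4, e3]
  rw [hc₀, e5] at key
  have e6 : 1/(2*α) * ((‖q - x‖^2 + 2*⟪q - x, x - p⟫ + ‖x - p‖^2) - ‖x - p‖^2 - ‖q - x‖^2)
      = (1/α) * ⟪q - x, x - p⟫ := by field_simp; ring
  rw [e6]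
  linarith

lemma contraction_step {c s a : ℝ} (hc : 0 ≤ c) (hs0 : 0 < s) (hs1 : s ≤ 1)
    (hcs : c^2 = 1 - s^2) (ha : 0 ≤ a) :
    c * (a / s^3 + a) ≤ a / s^3 := by
  have hs3 : (0:ℝ) < s^3 := by positivity
  have hsq : (c*(1+s^3))^2 = (1-s^2)*(1+s^3)^2 := by rw [mul_pow, hcs]
  have hle1 : (c*(1+s^3))^2 ≤ 1 := by
    nlinarith [sq_nonneg (1-s), sq_nonneg s, sq_nonneg (s^3),
      pow_nonneg (le_of_lt hs0) 3, pow_nonneg (le_of_lt hs0) 6, sq_nonneg (s*(1-s)),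
      mul_nonneg (mul_nonneg (sq_nonneg (s*(1-s))) (le_of_lt hs0)) (sub_nonneg.2 hs1)]
  have hc1 : c*(1+s^3) ≤ 1 := by
    nlinarith [mul_nonneg hc (by positivity : (0:ℝ) ≤ 1+s^3)]
  have e : a / s^3 + a = (1+s^3) * (a / s^3) := by field_simp
  rw [e, ← mul_assoc]
  calc c * (1+s^3) * (a/s^3) ≤ 1 * (a/s^3) :=
        mul_le_mul_of_nonneg_right hc1 (by positivity)
    _ = a/s^3 := one_mul _

lemma euc_norm_sq {n : ℕ} (v : EuclideanSpace ℝ (Fin n)) : ‖v‖^2 = ∑ k, (v k)^2 := by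
  rw [EuclideanSpace.norm_eq, Real.sq_sqrt (by positivity)]
  simp [Real.norm_eq_abs, sq_abs]

lemma sum_norm_le_sqrt {E : Type*} [NormedAddCommGroup E] {M : ℕ} (v : Fin M → E) :
    ∑ i, ‖v i‖ ≤ Real.sqrt M * Real.sqrt (∑ i, ‖v i‖^2) := by
  have h := Finset.sum_mul_sq_le_sq_mul_sq Finset.univ (fun i => ‖v i‖) (fun _ => (1:ℝ))
  simp only [mul_one, one_pow, Finset.sum_const, Finset.card_univ, Fintype.card_fin,
    nsmul_eq_mul] at h
  have h2 : (∑ i, ‖v i‖)^2 ≤ (M:ℝ) * ∑ i, ‖v i‖^2 := by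
    calc (∑ i, ‖v i‖)^2 ≤ (∑ i, ‖v i‖^2) * (M:ℝ) := h
      _ = (M:ℝ) * ∑ i, ‖v i‖^2 := by ring
  have hnn : 0 ≤ ∑ i, ‖v i‖ := Finset.sum_nonneg fun i _ => norm_nonneg _
  have := Real.sqrt_le_sqrt h2
  rwa [Real.sqrt_sq hnn, Real.sqrt_mul (Nat.cast_nonneg M)] at this

lemma frobenius_bound {d M : ℕ} (A : Matrix (Fin M) (Fin M) ℝ)
    (w : Fin M → EuclideanSpace ℝ (Fin d)) :
    ∑ i, ‖∑ j, A i j • w j‖^2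
      ≤ ‖LinearMap.toContinuousLinearMap (Matrix.toEuclideanLin A)‖^2 * ∑ j, ‖w j‖^2 := by
  set c := ‖LinearMap.toContinuousLinearMap (Matrix.toEuclideanLin A)‖ with hcdef
  have happ : ∀ (i : Fin M) (k : Fin d), (∑ j, A i j • w j) k = ∑ j, A i j * w j k := by
    intro i k
    simp [Finset.sum_apply]
  have key : ∀ k : Fin d,
      ∑ i, (∑ j, A i j * w j k)^2 ≤ c^2 * ∑ j, (w j k)^2 := by
    intro k
    set u : EuclideanSpace ℝ (Fin M) := (WithLp.equiv 2 _).symm (fun j => w j k) with hu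
    have h1 : ‖Matrix.toEuclideanLin A u‖ ≤ c * ‖u‖ :=
      ((LinearMap.toContinuousLinearMap (Matrix.toEuclideanLin A)).le_opNorm u)
    have h2 : ‖Matrix.toEuclideanLin A u‖^2 ≤ c^2 * ‖u‖^2 := by
      nlinarith [norm_nonneg (Matrix.toEuclideanLin A u), norm_nonneg u,
        mul_nonneg (hcdef ▸ norm_nonneg (LinearMap.toContinuousLinearMap
          (Matrix.toEuclideanLin A))) (norm_nonneg u)]
    have e1 : ‖Matrix.toEuclideanLin A u‖^2 = ∑ i, (∑ j, A i j * w j k)^2 := by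
      rw [euc_norm_sq]
      refine Finset.sum_congr rfl fun i _ => ?_
      congr 1
    have e2 : ‖u‖^2 = ∑ j, (w j k)^2 := euc_norm_sq u
    rw [e1, e2] at h2
    exact h2
  calc ∑ i, ‖∑ j, A i j • w j‖^2 = ∑ i, ∑ k, (∑ j, A i j * w j k)^2 := by
        refine Finset.sum_congr rfl fun i _ => ?_
        rw [euc_norm_sq]
        refine Finset.sum_congr rfl fun k _ => ?_
        rw [happ]
    _ = ∑ k, ∑ i, (∑ j, A i j * w j k)^2 := Finset.sum_comm
    _ ≤ ∑ k : Fin d, (c^2 * ∑ j, (w j k)^2) := Finset.sum_le_sum fun k _ => key k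
    _ = c^2 * ∑ j, ∑ k, (w j k)^2 := by rw [← Finset.mul_sum]; congr 1; exact Finset.sum_comm
    _ = c^2 * ∑ j, ‖w j‖^2 := by
        congr 1
        exact Finset.sum_congr rfl fun j _ => (euc_norm_sq (w j)).symm

lemma sum_Icc1 {β : Type*} [AddCommMonoid β] (T : ℕ) (f : ℕ → β) :
    ∑ t ∈ Finset.Icc 1 T, f t = ∑ k ∈ Finset.range T, f (k+1) := by
  rw [show Finset.Icc 1 T = Finset.Ico 1 (T+1) by rw [Finset.Ico_add_one_right_eq_Icc],
    Finset.sum_Ico_eq_sum_range]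
  simp [add_comm]

lemma young_ineq {a z α : ℝ} (hα : 0 < α) : a*z ≤ α*a^2 + z^2/(4*α) := by
  have h1 : a*z - α*a^2 ≤ z^2/(4*α) := by
    rw [le_div_iff₀ (by positivity : (0:ℝ) < 4*α)]
    nlinarith [sq_nonneg (2*α*a - z)]
  linarith


lemma sq_le_of_le {x y : ℝ} (hx : 0 ≤ x) (h : x ≤ y) : x^2 ≤ y^2 :=
  pow_le_pow_left₀ hx h 2

lemma le_of_sq_le {x y : ℝ} (hy : 0 ≤ y) (h : x^2 ≤ y^2) : x ≤ y := by
  nlinarith [sq_nonneg (x - y), sq_nonneg (x + y)]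

lemma half_aux {x T : ℝ} (hx : 0 ≤ x) (hT : 1 ≤ T) : x/2 + T*x ≤ 2*x*T := by
  nlinarith

lemma sq_diff_aux {A B R N : ℝ} (hA : A ≤ R) (hB : B ≤ R) (hA0 : 0 ≤ A) (hB0 : 0 ≤ B)
    (h1 : -N ≤ A - B) (h2 : A - B ≤ N) : A^2 - B^2 ≤ 2*R*N := by
  nlinarith

lemma hW_aux {b th g l ψ X : ℝ} (hb : 0 ≤ b) (hth : 0 ≤ th) (hg : 0 ≤ g) (hl : 0 ≤ l)
    (hψ : g ≤ ψ) (hX : X ≤ g + th*l) (hX0 : 0 ≤ X) :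
    b^2*X^2 ≤ 2*b^2*ψ^2 + 2*b^2*th^2*l^2 := by
  have h1 : X^2 ≤ (g + th*l)^2 := sq_le_of_le hX0 hX
  have h2 : (g + th*l)^2 ≤ 2*ψ^2 + 2*th^2*l^2 := by
    have h3 : g^2 ≤ ψ^2 := sq_le_of_le hg hψ
    nlinarith [sq_nonneg (g - th*l)]
  have h4 := mul_le_mul_of_nonneg_left (le_trans h1 h2) (sq_nonneg b)
  nlinarith [h4]

lemma mean_aux {G I U V W Vu ψ Mr b th : ℝ}
    (hG : b*G = I + b*th*U) (hI : I = Vu - U) (hns : W = V - 2*Vu + U)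
    (hW : W ≤ 2*b^2*ψ^2 + 2*b^2*th^2*U) (hbt : 0 ≤ b*th*(1 - b*th)*U)
    (hM : 0 < Mr) :
    -(Mr*G)*(2*b) ≤ Mr*(U - V) + 2*Mr*b^2*ψ^2 := by
  have key : Mr*W ≤ 2*Mr*b^2*ψ^2 + 2*Mr*(b*th)*U := by
    nlinarith [mul_le_mul_of_nonneg_left hW (le_of_lt hM), mul_pos hM hM,
      mul_nonneg (le_of_lt hM) hbt, mul_le_mul_of_nonneg_left hbt (le_of_lt hM)]
  nlinarith [key]

set_option maxHeartbeats 2000000 in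
/-- **Dynamic-regret bound for the attack-free decentralized online resource
allocation algorithm (Algorithm 1).** -/
theorem attack_free_dynamic_regret_bound
    (d M T : ℕ) (hM : 1 ≤ M) (hT : 1 ≤ T)
    -- local constraint sets
    (Ω : Fin M → Set (EuclideanSpace ℝ (Fin d)))
    (hΩne : ∀ i, (Ω i).Nonempty)
    (hΩcomp : ∀ i, IsCompact (Ω i))
    (hΩconv : ∀ i, Convex ℝ (Ω i))
    (R : ℝ) (hR : ∀ i, ∀ x ∈ Ω i, ∀ y ∈ Ω i, ‖x - y‖ ≤ R)
    -- cost functions and their gradients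
    (C : Fin M → ℕ → EuclideanSpace ℝ (Fin d) → ℝ)
    (gradC : Fin M → ℕ → EuclideanSpace ℝ (Fin d) → EuclideanSpace ℝ (Fin d))
    (hCconv : ∀ i, ∀ t ≤ T, ConvexOn ℝ Set.univ (C i t))
    (hCgrad : ∀ i, ∀ t ≤ T, ∀ x, HasGradientAt (C i t) (gradC i t x) x)
    (φ : ℝ) (hφ : ∀ i, ∀ t ≤ T, ∀ x ∈ Ω i, ‖gradC i t x‖ ≤ φ)
    -- demands and local constraint functions
    (D : ℕ → EuclideanSpace ℝ (Fin d))
    (Gt : Fin M → ℕ → EuclideanSpace ℝ (Fin d) → EuclideanSpace ℝ (Fin d))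
    (hGt : ∀ i t P, Gt i t P = (M : ℝ)⁻¹ • (P - D t))
    (ψt : ℝ) (hψt : ∀ i, ∀ t ≤ T, ∀ P ∈ Ω i, ‖Gt i t P‖ ≤ ψt)
    -- doubly stochastic weight matrix with spectral-gap condition
    (Et : Matrix (Fin M) (Fin M) ℝ)
    (hEnn : ∀ i j, 0 ≤ Et i j)
    (hErow : ∀ i, ∑ j, Et i j = 1)
    (hEcol : ∀ j, ∑ i, Et i j = 1)
    (κt : ℝ)
    (hκt : κt = ‖LinearMap.toContinuousLinearMap
        (Matrix.toEuclideanLin (Et - Matrix.of fun _ _ => (M : ℝ)⁻¹))‖ ^ 2)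
    (hκtlt : κt < 1)
    (εt : ℝ) (hεt : εt = 1 - κt)
    -- step sizes and regularization parameter
    (α β θ : ℝ) (hα : 0 < α) (hβ : 0 < β) (hθ : 0 < θ) (hβθ : β * θ ≤ 1)
    -- iterates of Algorithm 1
    (P lam lamhalf : Fin M → ℕ → EuclideanSpace ℝ (Fin d))
    (hP0 : ∀ i, P i 0 ∈ Ω i)
    (hlam0 : ∀ i, lam i 0 = 0)
    (hPmem : ∀ i, ∀ t ≤ T, P i (t + 1) ∈ Ω i)
    (hPmin : ∀ i, ∀ t ≤ T, ∀ Q ∈ Ω i,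
      ⟪P i (t + 1) - P i t, gradC i t (P i t) + (M : ℝ)⁻¹ • lam i t⟫
          + (1 / (2 * α)) * ‖P i (t + 1) - P i t‖ ^ 2
        ≤ ⟪Q - P i t, gradC i t (P i t) + (M : ℝ)⁻¹ • lam i t⟫
          + (1 / (2 * α)) * ‖Q - P i t‖ ^ 2)
    (hlamhalf : ∀ i, ∀ t ≤ T,
      lamhalf i t = lam i t + β • (Gt i t (P i t) - θ • lam i t))
    (hlamstep : ∀ i, ∀ t ≤ T, lam i (t + 1) = ∑ j, Et i j • lamhalf j t)
    -- comparator sequence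
    (Pstar : Fin M → ℕ → EuclideanSpace ℝ (Fin d))
    (hPstar : ∀ i, ∀ t ≤ T, Pstar i t ∈ Ω i)
    (hPstarG : ∀ t ∈ Finset.Icc 1 T, ∑ i, Gt i t (Pstar i t) = 0) :
    ∑ t ∈ Finset.Icc 1 T, ∑ i, (C i t (P i t) - C i t (Pstar i t))
      ≤ (R / α) * ∑ t ∈ Finset.Icc 1 T, ∑ i, ‖Pstar i t - Pstar i (t - 1)‖
        + (1 / (2 * α)) * ∑ i, ‖P i 1 - Pstar i 0‖ ^ 2
        + φ ^ 2 * (M : ℝ) * α * (T : ℝ)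
        + (4 * ψt ^ 2 * (M : ℝ) / (εt * Real.sqrt εt) + 2 * ψt ^ 2 * (M : ℝ))
            * β * (T : ℝ)
        + (ψt ^ 2 / (M : ℝ)) * α * (T : ℝ) / θ ^ 2 := by
  classical
  have hM0 : (0:ℝ) < M := by exact_mod_cast hM
  have hMne : (M:ℝ) ≠ 0 := ne_of_gt hM0
  have hT0 : (1:ℝ) ≤ T := by exact_mod_cast hT
  have hα' : α ≠ 0 := ne_of_gt hα
  have hθ' : θ ≠ 0 := ne_of_gt hθ
  have hβ' : β ≠ 0 := ne_of_gt hβ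
  have i0 : Fin M := ⟨0, hM⟩
  obtain ⟨x0, hx0⟩ := hΩne i0
  have hψ0 : 0 ≤ ψt := le_trans (norm_nonneg _) (hψt i0 0 (Nat.zero_le T) x0 hx0)
  have hφ0 : 0 ≤ φ := le_trans (norm_nonneg _) (hφ i0 0 (Nat.zero_le T) x0 hx0)
  have hR0 : 0 ≤ R := le_trans (norm_nonneg _) (hR i0 x0 hx0 x0 hx0)
  set c : ℝ := ‖LinearMap.toContinuousLinearMap
      (Matrix.toEuclideanLin (Et - Matrix.of fun _ _ => (M : ℝ)⁻¹))‖ with hcdef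
  have hc0 : 0 ≤ c := norm_nonneg _
  have hκ0 : 0 ≤ κt := by rw [hκt]; positivity
  have hε0 : 0 < εt := by rw [hεt]; linarith only [hκtlt]
  have hε1 : εt ≤ 1 := by rw [hεt]; linarith only [hκ0]
  set s : ℝ := Real.sqrt εt with hsdef
  have hs0 : 0 < s := Real.sqrt_pos.2 hε0
  have hs1 : s ≤ 1 := by
    rw [hsdef, show (1:ℝ) = Real.sqrt 1 by simp]
    exact Real.sqrt_le_sqrt hε1
  have hs2 : s^2 = εt := Real.sq_sqrt (le_of_lt hε0)
  have hs3 : εt * Real.sqrt εt = s^3 := by rw [← hsdef, ← hs2]; ring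
  have hcs : c^2 = 1 - s^2 := by rw [hs2, hεt, hκt, hcdef]; ring
  have hβθ0 : (0:ℝ) ≤ 1 - β*θ := by linarith only [hβθ]
  -- membership of iterates
  have hPm : ∀ t, t ≤ T + 1 → ∀ i, P i t ∈ Ω i := by
    intro t ht i
    cases t with
    | zero => exact hP0 i
    | succ n => exact hPmem i n (by omega)
  -- Gt facts
  have hGtd : ∀ t (i j : Fin M) x y, Gt i t x - Gt j t y = (M:ℝ)⁻¹ • (x - y) := by
    intro t i j x y
    rw [hGt, hGt, ← smul_sub]
    congr 1
    abel
  have hGtnorm : ∀ t, t ≤ T → ∀ i, ‖Gt i t (P i t)‖ ≤ ψt :=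
    fun t ht i => hψt i t ht _ (hPm t (by omega) i)
  -- lamhalf closed form
  have hlh : ∀ t, t ≤ T → ∀ j, lamhalf j t = (1 - β*θ) • lam j t + β • Gt j t (P j t) := by
    intro t ht j
    rw [hlamhalf j t ht]
    module
  -- bound on the multipliers
  have hlamB : ∀ t, t ≤ T + 1 → ∀ i, ‖lam i t‖ ≤ ψt / θ := by
    intro t
    induction t with
    | zero =>
      intro _ i
      rw [hlam0 i, norm_zero]
      positivity
    | succ n ih =>
      intro hn i
      have hnT : n ≤ T := by omega
      have hhalfB : ∀ j, ‖lamhalf j n‖ ≤ ψt / θ := by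
        intro j
        rw [hlh n hnT j]
        calc ‖(1-β*θ) • lam j n + β • Gt j n (P j n)‖
            ≤ ‖(1-β*θ) • lam j n‖ + ‖β • Gt j n (P j n)‖ := norm_add_le _ _
          _ = (1-β*θ)*‖lam j n‖ + β*‖Gt j n (P j n)‖ := by
              rw [norm_smul_of_nonneg hβθ0, norm_smul_of_nonneg (le_of_lt hβ)]
          _ ≤ (1-β*θ)*(ψt/θ) + β*ψt := by
              have h1 := ih (by omega) j
              have h2 := hGtnorm n hnT j
              have h3 := mul_le_mul_of_nonneg_left h1 hβθ0
              have h4 := mul_le_mul_of_nonneg_left h2 (le_of_lt hβ)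
              linarith only [h3, h4]
          _ = ψt/θ := by field_simp; ring
      rw [hlamstep i n hnT]
      calc ‖∑ j, Et i j • lamhalf j n‖ ≤ ∑ j, ‖Et i j • lamhalf j n‖ := norm_sum_le _ _
        _ = ∑ j, Et i j * ‖lamhalf j n‖ := by
            refine Finset.sum_congr rfl fun j _ => ?_
            rw [norm_smul_of_nonneg (hEnn i j)]
        _ ≤ ∑ j, Et i j * (ψt/θ) :=
            Finset.sum_le_sum fun j _ => mul_le_mul_of_nonneg_left (hhalfB j) (hEnn i j)
        _ = ψt/θ := by rw [← Finset.sum_mul, hErow i, one_mul]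
  -- averages
  set lbar : ℕ → EuclideanSpace ℝ (Fin d) := fun t => (M:ℝ)⁻¹ • ∑ i, lam i t with hlbar
  set Gbar : ℕ → EuclideanSpace ℝ (Fin d) := fun t => (M:ℝ)⁻¹ • ∑ i, Gt i t (P i t) with hGbar
  have hlbar0 : lbar 0 = 0 := by
    simp only [hlbar]
    simp [hlam0]
  have hsum_lamhalf : ∀ t, t ≤ T → ∑ i, lam i (t+1) = ∑ j, lamhalf j t := by
    intro t ht
    calc ∑ i, lam i (t+1) = ∑ i, ∑ j, Et i j • lamhalf j t :=
          Finset.sum_congr rfl fun i _ => hlamstep i t ht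
      _ = ∑ j, ∑ i, Et i j • lamhalf j t := Finset.sum_comm
      _ = ∑ j, (∑ i, Et i j) • lamhalf j t := by
          refine Finset.sum_congr rfl fun j _ => ?_
          rw [Finset.sum_smul]
      _ = ∑ j, lamhalf j t := by
          refine Finset.sum_congr rfl fun j _ => ?_
          rw [hEcol j, one_smul]
  have hlamhalf_sum : ∀ t, t ≤ T →
      ∑ j, lamhalf j t = (1-β*θ) • (∑ j, lam j t) + β • (∑ j, Gt j t (P j t)) := by
    intro t ht
    rw [Finset.smul_sum, Finset.smul_sum, ← Finset.sum_add_distrib]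
    exact Finset.sum_congr rfl fun j _ => hlh t ht j
  have hlbarstep : ∀ t, t ≤ T → lbar (t+1) = (1-β*θ) • lbar t + β • Gbar t := by
    intro t ht
    simp only [hlbar, hGbar]
    rw [hsum_lamhalf t ht, hlamhalf_sum t ht]
    rw [smul_add, smul_comm ((M:ℝ)⁻¹) (1-β*θ), smul_comm ((M:ℝ)⁻¹) β]
  have hlbarB : ∀ t, t ≤ T + 1 → ‖lbar t‖ ≤ ψt/θ := by
    intro t ht
    simp only [hlbar]
    rw [norm_smul_of_nonneg (by positivity : (0:ℝ) ≤ (M:ℝ)⁻¹)]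
    calc (M:ℝ)⁻¹ * ‖∑ i, lam i t‖ ≤ (M:ℝ)⁻¹ * ∑ i, ‖lam i t‖ := by
          exact mul_le_mul_of_nonneg_left (norm_sum_le _ _) (by positivity)
      _ ≤ (M:ℝ)⁻¹ * ∑ _i : Fin M, (ψt/θ) := by
          refine mul_le_mul_of_nonneg_left ?_ (by positivity)
          exact Finset.sum_le_sum fun i _ => hlamB t ht i
      _ = ψt/θ := by
          simp [Finset.sum_const, Finset.card_univ]
          field_simp
  have hGbarB : ∀ t, t ≤ T → ‖Gbar t‖ ≤ ψt := by
    intro t ht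
    simp only [hGbar]
    rw [norm_smul_of_nonneg (by positivity : (0:ℝ) ≤ (M:ℝ)⁻¹)]
    calc (M:ℝ)⁻¹ * ‖∑ i, Gt i t (P i t)‖ ≤ (M:ℝ)⁻¹ * ∑ i, ‖Gt i t (P i t)‖ :=
          mul_le_mul_of_nonneg_left (norm_sum_le _ _) (by positivity)
      _ ≤ (M:ℝ)⁻¹ * ∑ _i : Fin M, ψt := by
          refine mul_le_mul_of_nonneg_left ?_ (by positivity)
          exact Finset.sum_le_sum fun i _ => hGtnorm t ht i
      _ = ψt := by
          simp [Finset.sum_const, Finset.card_univ]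
          field_simp
  have hlbar1 : ‖lbar 1‖ ≤ β*ψt := by
    rw [show (1:ℕ) = 0 + 1 from rfl, hlbarstep 0 (Nat.zero_le T), hlbar0, smul_zero, zero_add,
      norm_smul_of_nonneg (le_of_lt hβ)]
    exact mul_le_mul_of_nonneg_left (hGbarB 0 (Nat.zero_le T)) (le_of_lt hβ)
  -- consensus bound
  set S : ℕ → ℝ := fun t => Real.sqrt (∑ i, ‖lam i t - lbar t‖^2) with hSdef
  have hSnn : ∀ t, 0 ≤ S t := fun t => Real.sqrt_nonneg _
  have hSsq : ∀ t, S t ^ 2 = ∑ i, ‖lam i t - lbar t‖^2 := by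
    intro t
    simp only [hSdef]
    exact Real.sq_sqrt (by positivity)
  set a : ℝ := 2*Real.sqrt M*ψt*β with hadef
  have ha0 : 0 ≤ a := by positivity
  have hSB : ∀ t, t ≤ T + 1 → S t ≤ a / s^3 := by
    intro t
    induction t with
    | zero =>
      intro _
      have : S 0 = 0 := by
        simp only [hSdef]
        rw [show ∑ i, ‖lam i 0 - lbar 0‖^2 = 0 from ?_, Real.sqrt_zero]
        refine Finset.sum_eq_zero fun i _ => ?_
        rw [hlam0 i, hlbar0]
        simp
      rw [this]
      positivity
    | succ n ih =>
      intro hn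
      have hnT : n ≤ T := by omega
      have ihn := ih (by omega)
      set w : Fin M → EuclideanSpace ℝ (Fin d) := fun j => lamhalf j n - lbar (n+1) with hwdef
      have hA0 : ∀ i : Fin M, ∑ j, (Et i j - (M:ℝ)⁻¹) = 0 := by
        intro i
        rw [Finset.sum_sub_distrib, hErow i]
        simp [Finset.sum_const, Finset.card_univ]
        field_simp
        norm_num
      have henew : ∀ i, lam i (n+1) - lbar (n+1) = ∑ j, (Et i j - (M:ℝ)⁻¹) • w j := by
        intro i
        simp only [hwdef]
        have e1 : ∑ j, (Et i j - (M:ℝ)⁻¹) • (lamhalf j n - lbar (n+1))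
            = ∑ j, (Et i j - (M:ℝ)⁻¹) • lamhalf j n
              - (∑ j, (Et i j - (M:ℝ)⁻¹)) • lbar (n+1) := by
          rw [Finset.sum_smul, ← Finset.sum_sub_distrib]
          exact Finset.sum_congr rfl fun j _ => by rw [smul_sub]
        rw [e1, hA0 i, zero_smul, sub_zero]
        have e2 : ∑ j, (Et i j - (M:ℝ)⁻¹) • lamhalf j n
            = (∑ j, Et i j • lamhalf j n) - (M:ℝ)⁻¹ • ∑ j, lamhalf j n := by
          rw [Finset.smul_sum, ← Finset.sum_sub_distrib]
          exact Finset.sum_congr rfl fun j _ => by rw [sub_smul]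
        rw [e2, ← hlamstep i n hnT]
        congr 1
        simp only [hlbar]
        rw [hsum_lamhalf n hnT]
      have hfrob : ∑ i, ‖lam i (n+1) - lbar (n+1)‖^2 ≤ c^2 * ∑ j, ‖w j‖^2 := by
        have := frobenius_bound (Et - Matrix.of fun _ _ => (M:ℝ)⁻¹) w
        have heq : ∀ i : Fin M,
            (∑ j, ((Et - Matrix.of fun _ _ => (M:ℝ)⁻¹ : Matrix (Fin M) (Fin M) ℝ)) i j • w j)
            = lam i (n+1) - lbar (n+1) := by
          intro i
          rw [henew i]
          exact Finset.sum_congr rfl fun j _ => by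
            rw [Matrix.sub_apply, Matrix.of_apply]
        calc ∑ i, ‖lam i (n+1) - lbar (n+1)‖^2
            = ∑ i, ‖∑ j, ((Et - Matrix.of fun _ _ => (M:ℝ)⁻¹ : Matrix (Fin M) (Fin M) ℝ)) i j • w j‖^2 := by
              exact Finset.sum_congr rfl fun i _ => by rw [heq i]
          _ ≤ _ := this
      have hwbound : ∀ j, ‖w j‖ ≤ ‖lam j n - lbar n‖ + 2*β*ψt := by
        intro j
        have hwj : w j = (1-β*θ) • (lam j n - lbar n) + β • (Gt j n (P j n) - Gbar n) := by
          simp only [hwdef]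
          rw [hlh n hnT j, hlbarstep n hnT]
          module
        rw [hwj]
        calc ‖(1-β*θ) • (lam j n - lbar n) + β • (Gt j n (P j n) - Gbar n)‖
            ≤ ‖(1-β*θ) • (lam j n - lbar n)‖ + ‖β • (Gt j n (P j n) - Gbar n)‖ := norm_add_le _ _
          _ = (1-β*θ)*‖lam j n - lbar n‖ + β*‖Gt j n (P j n) - Gbar n‖ := by
              rw [norm_smul_of_nonneg hβθ0, norm_smul_of_nonneg (le_of_lt hβ)]
          _ ≤ ‖lam j n - lbar n‖ + 2*β*ψt := by
              have h1 : (1-β*θ)*‖lam j n - lbar n‖ ≤ ‖lam j n - lbar n‖ := by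
                have h0 := mul_nonneg (mul_nonneg (le_of_lt hβ) (le_of_lt hθ))
                  (norm_nonneg (lam j n - lbar n))
                linarith only [h0]
              have h2 : ‖Gt j n (P j n) - Gbar n‖ ≤ 2*ψt := by
                calc ‖Gt j n (P j n) - Gbar n‖ ≤ ‖Gt j n (P j n)‖ + ‖Gbar n‖ := norm_sub_le _ _
                  _ ≤ ψt + ψt := add_le_add (hGtnorm n hnT j) (hGbarB n hnT)
                  _ = 2*ψt := by ring
              have h5 := mul_le_mul_of_nonneg_left h2 (le_of_lt hβ)
              linarith only [h1, h5]
      have hwsq : ∑ j, ‖w j‖^2 ≤ (S n + 2*β*ψt*Real.sqrt M)^2 := by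
        have hsum1 : ∑ j, ‖lam j n - lbar n‖ ≤ Real.sqrt M * S n := by
          have := sum_norm_le_sqrt (fun j => lam j n - lbar n)
          simp only [hSdef]
          exact this
        have hMsq : Real.sqrt M * Real.sqrt M = (M:ℝ) := Real.mul_self_sqrt (Nat.cast_nonneg M)
        calc ∑ j, ‖w j‖^2 ≤ ∑ j, (‖lam j n - lbar n‖ + 2*β*ψt)^2 := by
              refine Finset.sum_le_sum fun j _ => ?_
              exact sq_le_of_le (norm_nonneg (w j)) (hwbound j)
          _ = (∑ j, ‖lam j n - lbar n‖^2) + 4*β*ψt*(∑ j, ‖lam j n - lbar n‖)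
              + (M:ℝ)*(2*β*ψt)^2 := by
              simp only [add_sq]
              rw [Finset.sum_add_distrib, Finset.sum_add_distrib]
              have e : ∑ j, 2*‖lam j n - lbar n‖*(2*β*ψt)
                  = 4*β*ψt*(∑ j, ‖lam j n - lbar n‖) := by
                rw [Finset.mul_sum]
                exact Finset.sum_congr rfl fun j _ => by ring
              rw [e, Finset.sum_const, Finset.card_univ]
              simp [Fintype.card_fin, nsmul_eq_mul]
          _ ≤ (S n)^2 + 4*β*ψt*(Real.sqrt M * S n) + (M:ℝ)*(2*β*ψt)^2 := by
              have h1 : 0 ≤ 4*β*ψt := by positivity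
              have h6 := mul_le_mul_of_nonneg_left hsum1 h1
              rw [hSsq n]
              linarith only [h6]
          _ = (S n + 2*β*ψt*Real.sqrt M)^2 := by
              have hMs : Real.sqrt M ^ 2 = (M:ℝ) := Real.sq_sqrt (Nat.cast_nonneg M)
              linear_combination (4*β^2*ψt^2) * hMs.symm
      have hstep : S (n+1) ≤ c * (S n + 2*β*ψt*Real.sqrt M) := by
        have h1 : S (n+1)^2 ≤ (c * (S n + 2*β*ψt*Real.sqrt M))^2 := by
          rw [hSsq, mul_pow]
          calc ∑ i, ‖lam i (n+1) - lbar (n+1)‖^2 ≤ c^2 * ∑ j, ‖w j‖^2 := hfrob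
            _ ≤ c^2 * (S n + 2*β*ψt*Real.sqrt M)^2 :=
                mul_le_mul_of_nonneg_left hwsq (by positivity)
        have hrhs : 0 ≤ c * (S n + 2*β*ψt*Real.sqrt M) := by
          apply mul_nonneg hc0
          have := hSnn n
          positivity
        exact le_of_sq_le hrhs h1
      have haeq : 2*β*ψt*Real.sqrt M = a := by rw [hadef]; ring
      calc S (n+1) ≤ c * (S n + 2*β*ψt*Real.sqrt M) := hstep
        _ ≤ c * (a/s^3 + a) := by
            rw [haeq]
            exact mul_le_mul_of_nonneg_left (add_le_add_left ihn a) hc0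
        _ ≤ a/s^3 := contraction_step hc0 hs0 hs1 hcs ha0
  -- per-step primal inequality
  have keyit : ∀ t ∈ Finset.Icc 1 T, ∀ i : Fin M,
      C i t (P i t) - C i t (Pstar i t)
        ≤ α*φ^2 + α*ψt^2/((M:ℝ)^2*θ^2)
          + 1/(2*α) * (‖Pstar i t - P i t‖^2 - ‖Pstar i t - P i (t+1)‖^2)
          + ⟪lam i t, Gt i t (Pstar i t) - Gt i t (P i t)⟫ := by
    intro t ht i
    rw [Finset.mem_Icc] at ht
    obtain ⟨ht1, htT⟩ := ht
    set g := gradC i t (P i t) + (M:ℝ)⁻¹ • lam i t with hgdef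
    set p := P i t with hpdef
    set x := P i (t+1) with hxdef
    set q := Pstar i t with hqdef
    have hpΩ : p ∈ Ω i := hPm t (by omega) i
    have hxΩ : x ∈ Ω i := hPmem i t htT
    have hqΩ : q ∈ Ω i := hPstar i t htT
    have a1 : C i t p - C i t q ≤ ⟪gradC i t p, p - q⟫ :=
      grad_convex_ineq (hCconv i t htT) p q (hCgrad i t htT p)
    have a2 : ⟪g, x - q⟫ ≤ 1/(2*α) * (‖q - p‖^2 - ‖x - p‖^2 - ‖q - x‖^2) := by
      refine prox_strong (hΩconv i) hα g p x q hxΩ hqΩ ?_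
      intro Q hQ
      exact hPmin i t htT Q hQ
    have hgradB : ‖gradC i t p‖ ≤ φ := hφ i t htT p hpΩ
    have hlamB' : ‖lam i t‖ ≤ ψt/θ := hlamB t (by omega) i
    have a3 : ⟪gradC i t p, p - x⟫ ≤ α*φ^2 + ‖x - p‖^2/(4*α) := by
      have h1 : ⟪gradC i t p, p - x⟫ ≤ ‖gradC i t p‖ * ‖p - x‖ := real_inner_le_norm _ _
      have h2 : ‖p - x‖ = ‖x - p‖ := norm_sub_rev _ _
      have h3 : ‖gradC i t p‖ * ‖x - p‖ ≤ φ * ‖x - p‖ :=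
        mul_le_mul_of_nonneg_right hgradB (norm_nonneg _)
      have h4 : φ * ‖x - p‖ ≤ α*φ^2 + ‖x - p‖^2/(4*α) := young_ineq hα
      rw [h2] at h1
      linarith only [h1, h3, h4]
    have a4 : -((M:ℝ)⁻¹ * ⟪lam i t, x - p⟫)
        ≤ α*ψt^2/((M:ℝ)^2*θ^2) + ‖x - p‖^2/(4*α) := by
      have h1 : -⟪lam i t, x - p⟫ ≤ ‖lam i t‖ * ‖x - p‖ := by
        have h := abs_real_inner_le_norm (lam i t) (x - p)
        rw [abs_le] at h
        linarith only [h.1]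
      have h2 : ‖lam i t‖ * ‖x - p‖ ≤ (ψt/θ) * ‖x - p‖ :=
        mul_le_mul_of_nonneg_right hlamB' (norm_nonneg _)
      have h5 : -((M:ℝ)⁻¹ * ⟪lam i t, x - p⟫) ≤ (M:ℝ)⁻¹ * ((ψt/θ) * ‖x - p‖) := by
        have hMi : (0:ℝ) ≤ (M:ℝ)⁻¹ := by positivity
        have h6 := mul_le_mul_of_nonneg_left (le_trans h1 h2) hMi
        linarith only [h6]
      have h3 : (M:ℝ)⁻¹ * ((ψt/θ) * ‖x - p‖)
          ≤ α*(ψt/((M:ℝ)*θ))^2 + ‖x - p‖^2/(4*α) := by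
        have hy := young_ineq (a := ψt/((M:ℝ)*θ)) (z := ‖x - p‖) hα
        have he : (M:ℝ)⁻¹ * ((ψt/θ) * ‖x - p‖) = (ψt/((M:ℝ)*θ)) * ‖x - p‖ := by
          field_simp
        rw [he]
        exact hy
      have h4 : α*(ψt/((M:ℝ)*θ))^2 = α*ψt^2/((M:ℝ)^2*θ^2) := by
        rw [div_pow, mul_pow]
        ring
      linarith only [h5, h3, h4.le, h4.ge]
    have a5 : -((M:ℝ)⁻¹ * ⟪lam i t, p - q⟫) = ⟪lam i t, Gt i t q - Gt i t p⟫ := by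
      rw [hGtd t i i q p, real_inner_smul_right]
      have hqp : ⟪lam i t, q - p⟫ = -⟪lam i t, p - q⟫ := by
        rw [← inner_neg_right]
        congr 1
        abel
      rw [hqp]
      ring
    have iden : ⟪gradC i t p, p - q⟫
        = ⟪gradC i t p, p - x⟫ + ⟪g, x - q⟫ - (M:ℝ)⁻¹ * ⟪lam i t, x - p⟫
          - (M:ℝ)⁻¹ * ⟪lam i t, p - q⟫ := by
      simp only [hgdef, inner_add_left, real_inner_smul_left, inner_sub_right]
      ring
    have hcanc : ‖x - p‖^2/(4*α) + ‖x - p‖^2/(4*α) = 1/(2*α)*‖x - p‖^2 := by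
      field_simp
      ring
    have hdist : 1/(2*α) * (‖q - p‖^2 - ‖q - x‖^2)
        = 1/(2*α)*(‖q - p‖^2 - ‖x - p‖^2 - ‖q - x‖^2) + 1/(2*α)*‖x - p‖^2 := by
      ring
    linarith only [a1, a2, a3, a4, a5.le, a5.ge, iden.le, iden.ge, hcanc, hdist.le, hdist.ge]
  -- per-step dual inequality
  have hdual : ∀ t, 1 ≤ t → t ≤ T →
      ∑ i, ⟪lam i t, Gt i t (Pstar i t) - Gt i t (P i t)⟫
        ≤ 4*ψt^2*(M:ℝ)*β/(εt*Real.sqrt εt)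
          + (M:ℝ)/(2*β)*(‖lbar t‖^2 - ‖lbar (t+1)‖^2) + (M:ℝ)*β*ψt^2 := by
    intro t ht1 htT
    have hMsq : Real.sqrt M * Real.sqrt M = (M:ℝ) := Real.mul_self_sqrt (Nat.cast_nonneg M)
    have hsplit : ∀ i : Fin M, ⟪lam i t, Gt i t (Pstar i t) - Gt i t (P i t)⟫
        = ⟪lam i t - lbar t, Gt i t (Pstar i t) - Gt i t (P i t)⟫
          + (⟪lbar t, Gt i t (Pstar i t)⟫ - ⟪lbar t, Gt i t (P i t)⟫) := by
      intro i
      simp only [inner_sub_left, inner_sub_right]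
      ring
    have hzero : ∑ i, ⟪lbar t, Gt i t (Pstar i t)⟫ = (0:ℝ) := by
      rw [← inner_sum, hPstarG t (Finset.mem_Icc.mpr ⟨ht1, htT⟩), inner_zero_right]
    have hGsum : ∑ i, ⟪lbar t, Gt i t (P i t)⟫ = (M:ℝ) * ⟪lbar t, Gbar t⟫ := by
      rw [← inner_sum]
      have hMG : (∑ i, Gt i t (P i t)) = (M:ℝ) • Gbar t := by
        simp only [hGbar]
        rw [smul_smul]
        field_simp
        rw [one_smul]
      rw [hMG, real_inner_smul_right]
    have hconsensus : ∑ i, ⟪lam i t - lbar t, Gt i t (Pstar i t) - Gt i t (P i t)⟫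
        ≤ 4*ψt^2*(M:ℝ)*β/(εt*Real.sqrt εt) := by
      have hper : ∀ i : Fin M, ⟪lam i t - lbar t, Gt i t (Pstar i t) - Gt i t (P i t)⟫
          ≤ ‖lam i t - lbar t‖ * (2*ψt) := by
        intro i
        have h1 := real_inner_le_norm (lam i t - lbar t) (Gt i t (Pstar i t) - Gt i t (P i t))
        have h2 : ‖Gt i t (Pstar i t) - Gt i t (P i t)‖ ≤ 2*ψt := by
          calc ‖Gt i t (Pstar i t) - Gt i t (P i t)‖
              ≤ ‖Gt i t (Pstar i t)‖ + ‖Gt i t (P i t)‖ := norm_sub_le _ _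
            _ ≤ ψt + ψt := add_le_add (hψt i t htT _ (hPstar i t htT)) (hGtnorm t htT i)
            _ = 2*ψt := by ring
        calc ⟪lam i t - lbar t, Gt i t (Pstar i t) - Gt i t (P i t)⟫
            ≤ ‖lam i t - lbar t‖ * ‖Gt i t (Pstar i t) - Gt i t (P i t)‖ := h1
          _ ≤ ‖lam i t - lbar t‖ * (2*ψt) :=
              mul_le_mul_of_nonneg_left h2 (norm_nonneg _)
      have hsum1 : ∑ i, ‖lam i t - lbar t‖ ≤ Real.sqrt M * S t := by
        have := sum_norm_le_sqrt (fun i => lam i t - lbar t)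
        simp only [hSdef]
        exact this
      have hfinal : Real.sqrt M * (a/s^3) * (2*ψt) = 4*ψt^2*(M:ℝ)*β/(εt*Real.sqrt εt) := by
        rw [show εt*Real.sqrt εt = s^3 from hs3, hadef]
        have key : Real.sqrt M * (2*Real.sqrt M*ψt*β) * (2*ψt) = 4*ψt^2*(M:ℝ)*β := by
          linear_combination (4*ψt^2*β) * hMsq
        calc Real.sqrt M * (2*Real.sqrt M*ψt*β/s^3) * (2*ψt)
            = (Real.sqrt M * (2*Real.sqrt M*ψt*β) * (2*ψt))/s^3 := by ring
          _ = (4*ψt^2*(M:ℝ)*β)/s^3 := by rw [key]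
      calc ∑ i, ⟪lam i t - lbar t, Gt i t (Pstar i t) - Gt i t (P i t)⟫
          ≤ ∑ i, ‖lam i t - lbar t‖ * (2*ψt) := Finset.sum_le_sum fun i _ => hper i
        _ = (∑ i, ‖lam i t - lbar t‖) * (2*ψt) := by rw [Finset.sum_mul]
        _ ≤ (Real.sqrt M * S t) * (2*ψt) :=
            mul_le_mul_of_nonneg_right hsum1 (by positivity)
        _ ≤ (Real.sqrt M * (a/s^3)) * (2*ψt) := by
            have := hSB t (by omega)
            have h1 : Real.sqrt M * S t ≤ Real.sqrt M * (a/s^3) :=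
              mul_le_mul_of_nonneg_left this (Real.sqrt_nonneg M)
            exact mul_le_mul_of_nonneg_right h1 (by positivity)
        _ = 4*ψt^2*(M:ℝ)*β/(εt*Real.sqrt εt) := hfinal
    have hmean : -((M:ℝ) * ⟪lbar t, Gbar t⟫)
        ≤ (M:ℝ)/(2*β)*(‖lbar t‖^2 - ‖lbar (t+1)‖^2) + (M:ℝ)*β*ψt^2 := by
      have hΔ : lbar (t+1) - lbar t = β • (Gbar t - θ • lbar t) := by
        rw [hlbarstep t htT]
        module
      have hns := norm_sub_sq_real (lbar (t+1)) (lbar t)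
      have hinner : ⟪lbar t, lbar (t+1) - lbar t⟫ = ⟪lbar (t+1), lbar t⟫ - ‖lbar t‖^2 := by
        rw [inner_sub_right, real_inner_self_eq_norm_sq, real_inner_comm]
      have hGid : β * ⟪lbar t, Gbar t⟫
          = ⟪lbar t, lbar (t+1) - lbar t⟫ + β*θ*‖lbar t‖^2 := by
        have hsm : ⟪lbar t, β • Gbar t⟫ = β * ⟪lbar t, Gbar t⟫ :=
          real_inner_smul_right _ _ _
        rw [← hsm]
        have hb : β • Gbar t = (lbar (t+1) - lbar t) + (β*θ) • lbar t := by
          rw [hΔ]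
          module
        rw [hb, inner_add_right, real_inner_smul_right, real_inner_self_eq_norm_sq]
      have hW : ‖lbar (t+1) - lbar t‖^2 ≤ 2*β^2*ψt^2 + 2*β^2*θ^2*‖lbar t‖^2 := by
        rw [hΔ, norm_smul_of_nonneg (le_of_lt hβ), mul_pow]
        have h1 : ‖Gbar t - θ • lbar t‖ ≤ ‖Gbar t‖ + θ*‖lbar t‖ := by
          calc ‖Gbar t - θ • lbar t‖ ≤ ‖Gbar t‖ + ‖θ • lbar t‖ := norm_sub_le _ _
            _ = ‖Gbar t‖ + θ*‖lbar t‖ := by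
                rw [norm_smul_of_nonneg (le_of_lt hθ)]
        have hGB := hGbarB t htT
        have := hW_aux (le_of_lt hβ) (le_of_lt hθ) (norm_nonneg (Gbar t))
          (norm_nonneg (lbar t)) hGB h1 (norm_nonneg (Gbar t - θ • lbar t))
        linarith only [this]
      have hU0 : (0:ℝ) ≤ ‖lbar t‖^2 := sq_nonneg _
      refine (mul_le_mul_iff_of_pos_right (by positivity : (0:ℝ) < 2*β)).mp ?_
      have hexp : ((M:ℝ)/(2*β)*(‖lbar t‖^2 - ‖lbar (t+1)‖^2) + (M:ℝ)*β*ψt^2)*(2*β)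
          = (M:ℝ)*(‖lbar t‖^2 - ‖lbar (t+1)‖^2) + 2*(M:ℝ)*β^2*ψt^2 := by
        field_simp
      rw [hexp]
      have hbt : (0:ℝ) ≤ β*θ*(1 - β*θ)*‖lbar t‖^2 :=
        mul_nonneg (mul_nonneg (mul_nonneg (le_of_lt hβ) (le_of_lt hθ))
          (by linarith only [hβθ])) hU0
      have := mean_aux (G := ⟪lbar t, Gbar t⟫) (I := ⟪lbar t, lbar (t+1) - lbar t⟫)
        (U := ‖lbar t‖^2) (V := ‖lbar (t+1)‖^2) (W := ‖lbar (t+1) - lbar t‖^2)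
        (Vu := ⟪lbar (t+1), lbar t⟫) (ψ := ψt) (Mr := (M:ℝ)) (b := β) (th := θ)
        hGid hinner hns hW hbt hM0
      linarith only [this]
    calc ∑ i, ⟪lam i t, Gt i t (Pstar i t) - Gt i t (P i t)⟫
        = ∑ i, (⟪lam i t - lbar t, Gt i t (Pstar i t) - Gt i t (P i t)⟫
            + (⟪lbar t, Gt i t (Pstar i t)⟫ - ⟪lbar t, Gt i t (P i t)⟫)) :=
          Finset.sum_congr rfl fun i _ => hsplit i
      _ = (∑ i, ⟪lam i t - lbar t, Gt i t (Pstar i t) - Gt i t (P i t)⟫)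
          + ((∑ i, ⟪lbar t, Gt i t (Pstar i t)⟫) - ∑ i, ⟪lbar t, Gt i t (P i t)⟫) := by
          rw [Finset.sum_add_distrib, Finset.sum_sub_distrib]
      _ = (∑ i, ⟪lam i t - lbar t, Gt i t (Pstar i t) - Gt i t (P i t)⟫)
          + -((M:ℝ) * ⟪lbar t, Gbar t⟫) := by
          rw [hzero, hGsum]
          ring
      _ ≤ 4*ψt^2*(M:ℝ)*β/(εt*Real.sqrt εt)
          + ((M:ℝ)/(2*β)*(‖lbar t‖^2 - ‖lbar (t+1)‖^2) + (M:ℝ)*β*ψt^2) :=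
          add_le_add hconsensus hmean
      _ = _ := by ring
  -- summed dual bound
  have hdualsum : ∑ t ∈ Finset.Icc 1 T, ∑ i, ⟪lam i t, Gt i t (Pstar i t) - Gt i t (P i t)⟫
      ≤ (4*ψt^2*(M:ℝ)/(εt*Real.sqrt εt) + 2*ψt^2*(M:ℝ)) * β * (T:ℝ) := by
    have htel : ∑ t ∈ Finset.Icc 1 T, (‖lbar t‖^2 - ‖lbar (t+1)‖^2)
        = ‖lbar 1‖^2 - ‖lbar (T+1)‖^2 := by
      rw [sum_Icc1 T (fun t => ‖lbar t‖^2 - ‖lbar (t+1)‖^2)]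
      exact Finset.sum_range_sub' (fun k => ‖lbar (k+1)‖^2) T
    have hstep1 : ∑ t ∈ Finset.Icc 1 T, ∑ i, ⟪lam i t, Gt i t (Pstar i t) - Gt i t (P i t)⟫
        ≤ ∑ t ∈ Finset.Icc 1 T, (4*ψt^2*(M:ℝ)*β/(εt*Real.sqrt εt)
            + (M:ℝ)/(2*β)*(‖lbar t‖^2 - ‖lbar (t+1)‖^2) + (M:ℝ)*β*ψt^2) := by
      refine Finset.sum_le_sum fun t ht => ?_
      rw [Finset.mem_Icc] at ht
      exact hdual t ht.1 ht.2
    have hsplitsum : ∑ t ∈ Finset.Icc 1 T, (4*ψt^2*(M:ℝ)*β/(εt*Real.sqrt εt)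
          + (M:ℝ)/(2*β)*(‖lbar t‖^2 - ‖lbar (t+1)‖^2) + (M:ℝ)*β*ψt^2)
        = (T:ℝ)*(4*ψt^2*(M:ℝ)*β/(εt*Real.sqrt εt))
          + (M:ℝ)/(2*β)*(‖lbar 1‖^2 - ‖lbar (T+1)‖^2) + (T:ℝ)*((M:ℝ)*β*ψt^2) := by
      rw [Finset.sum_add_distrib, Finset.sum_add_distrib, ← Finset.mul_sum, htel]
      rw [Finset.sum_const, Finset.sum_const, Nat.card_Icc]
      simp [nsmul_eq_mul]
    have hl1 : ‖lbar 1‖^2 ≤ β^2*ψt^2 := by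
      have := sq_le_of_le (norm_nonneg (lbar 1)) hlbar1
      calc ‖lbar 1‖^2 ≤ (β*ψt)^2 := this
        _ = β^2*ψt^2 := by ring
    have hlT : (0:ℝ) ≤ ‖lbar (T+1)‖^2 := sq_nonneg _
    have hc2 : (M:ℝ)/(2*β)*(‖lbar 1‖^2 - ‖lbar (T+1)‖^2) ≤ (M:ℝ)*β*ψt^2/2 := by
      have h1 : (M:ℝ)/(2*β)*(‖lbar 1‖^2 - ‖lbar (T+1)‖^2) ≤ (M:ℝ)/(2*β)*(β^2*ψt^2) := by
        refine mul_le_mul_of_nonneg_left (by linarith only [hl1, hlT]) (by positivity)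
      have h2 : (M:ℝ)/(2*β)*(β^2*ψt^2) = (M:ℝ)*β*ψt^2/2 := by
        field_simp
      linarith only [h1, h2.le, h2.ge]
    have hfin : (T:ℝ)*(4*ψt^2*(M:ℝ)*β/(εt*Real.sqrt εt)) + (M:ℝ)*β*ψt^2/2
          + (T:ℝ)*((M:ℝ)*β*ψt^2)
        ≤ (4*ψt^2*(M:ℝ)/(εt*Real.sqrt εt) + 2*ψt^2*(M:ℝ)) * β * (T:ℝ) := by
      have hmb : (0:ℝ) ≤ (M:ℝ)*β*ψt^2 := by positivity
      have h3 : (M:ℝ)*β*ψt^2/2 + (T:ℝ)*((M:ℝ)*β*ψt^2) ≤ 2*ψt^2*(M:ℝ)*β*(T:ℝ) := by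
        have := half_aux hmb hT0
        linarith only [this]
      have h4 : (T:ℝ)*(4*ψt^2*(M:ℝ)*β/(εt*Real.sqrt εt))
          = 4*ψt^2*(M:ℝ)/(εt*Real.sqrt εt)*β*(T:ℝ) := by ring
      linarith only [h3, h4.le, h4.ge]
    calc ∑ t ∈ Finset.Icc 1 T, ∑ i, ⟪lam i t, Gt i t (Pstar i t) - Gt i t (P i t)⟫
        ≤ (T:ℝ)*(4*ψt^2*(M:ℝ)*β/(εt*Real.sqrt εt))
          + (M:ℝ)/(2*β)*(‖lbar 1‖^2 - ‖lbar (T+1)‖^2) + (T:ℝ)*((M:ℝ)*β*ψt^2) := by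
          rw [← hsplitsum]
          exact hstep1
      _ ≤ (T:ℝ)*(4*ψt^2*(M:ℝ)*β/(εt*Real.sqrt εt)) + (M:ℝ)*β*ψt^2/2
          + (T:ℝ)*((M:ℝ)*β*ψt^2) := by linarith only [hc2]
      _ ≤ _ := hfin
  -- primal telescoping bound, per agent
  have htele : ∀ i : Fin M,
      ∑ t ∈ Finset.Icc 1 T, (‖Pstar i t - P i t‖^2 - ‖Pstar i t - P i (t+1)‖^2)
        ≤ 2*R*(∑ t ∈ Finset.Icc 1 T, ‖Pstar i t - Pstar i (t-1)‖)
          + ‖P i 1 - Pstar i 0‖^2 := by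
    intro i
    have hsplit2 : ∀ t ∈ Finset.Icc 1 T,
        ‖Pstar i t - P i t‖^2 - ‖Pstar i t - P i (t+1)‖^2
          = (‖Pstar i t - P i t‖^2 - ‖Pstar i (t-1) - P i t‖^2)
            + (‖Pstar i (t-1) - P i t‖^2 - ‖Pstar i t - P i (t+1)‖^2) := by
      intro t _
      ring
    have hterm : ∀ t ∈ Finset.Icc 1 T,
        ‖Pstar i t - P i t‖^2 - ‖Pstar i (t-1) - P i t‖^2
          ≤ 2*R*‖Pstar i t - Pstar i (t-1)‖ := by
      intro t ht
      rw [Finset.mem_Icc] at ht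
      obtain ⟨ht1, htT⟩ := ht
      have hq1 : Pstar i t ∈ Ω i := hPstar i t htT
      have hq0 : Pstar i (t-1) ∈ Ω i := hPstar i (t-1) (by omega)
      have hpt : P i t ∈ Ω i := hPm t (by omega) i
      have ha : ‖Pstar i t - P i t‖ ≤ R := hR i _ hq1 _ hpt
      have hb : ‖Pstar i (t-1) - P i t‖ ≤ R := hR i _ hq0 _ hpt
      have habs : |‖Pstar i t - P i t‖ - ‖Pstar i (t-1) - P i t‖|
          ≤ ‖Pstar i t - Pstar i (t-1)‖ := by
        have := abs_norm_sub_norm_le (Pstar i t - P i t) (Pstar i (t-1) - P i t)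
        have he : (Pstar i t - P i t) - (Pstar i (t-1) - P i t)
            = Pstar i t - Pstar i (t-1) := by abel
        rwa [he] at this
      rw [abs_le] at habs
      exact sq_diff_aux ha hb (norm_nonneg _) (norm_nonneg _) habs.1 habs.2
    have htel2 : ∑ t ∈ Finset.Icc 1 T,
        (‖Pstar i (t-1) - P i t‖^2 - ‖Pstar i t - P i (t+1)‖^2)
          ≤ ‖P i 1 - Pstar i 0‖^2 := by
      have heq : ∀ t ∈ Finset.Icc 1 T,
          ‖Pstar i (t-1) - P i t‖^2 - ‖Pstar i t - P i (t+1)‖^2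
            = (fun u => ‖Pstar i (u-1) - P i u‖^2) t
              - (fun u => ‖Pstar i (u-1) - P i u‖^2) (t+1) := by
        intro t _
        rfl
      rw [Finset.sum_congr rfl heq, sum_Icc1 T
        (fun t => (fun u => ‖Pstar i (u-1) - P i u‖^2) t
          - (fun u => ‖Pstar i (u-1) - P i u‖^2) (t+1))]
      rw [Finset.sum_range_sub' (fun k => (fun u => ‖Pstar i (u-1) - P i u‖^2) (k+1)) T]
      simp only []
      have h1 : ‖Pstar i 0 - P i 1‖^2 = ‖P i 1 - Pstar i 0‖^2 := by
        rw [norm_sub_rev]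
      have h2 : (0:ℝ) ≤ ‖Pstar i (T+1-1) - P i (T+1)‖^2 := sq_nonneg _
      simp only [Nat.add_sub_cancel] at *
      linarith only [h1.le, h1.ge, h2]
    calc ∑ t ∈ Finset.Icc 1 T, (‖Pstar i t - P i t‖^2 - ‖Pstar i t - P i (t+1)‖^2)
        = ∑ t ∈ Finset.Icc 1 T, ((‖Pstar i t - P i t‖^2 - ‖Pstar i (t-1) - P i t‖^2)
            + (‖Pstar i (t-1) - P i t‖^2 - ‖Pstar i t - P i (t+1)‖^2)) :=
          Finset.sum_congr rfl hsplit2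
      _ = (∑ t ∈ Finset.Icc 1 T, (‖Pstar i t - P i t‖^2 - ‖Pstar i (t-1) - P i t‖^2))
          + ∑ t ∈ Finset.Icc 1 T, (‖Pstar i (t-1) - P i t‖^2 - ‖Pstar i t - P i (t+1)‖^2) :=
          Finset.sum_add_distrib
      _ ≤ (∑ t ∈ Finset.Icc 1 T, 2*R*‖Pstar i t - Pstar i (t-1)‖) + ‖P i 1 - Pstar i 0‖^2 :=
          add_le_add (Finset.sum_le_sum hterm) htel2
      _ = 2*R*(∑ t ∈ Finset.Icc 1 T, ‖Pstar i t - Pstar i (t-1)‖) + ‖P i 1 - Pstar i 0‖^2 := by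
          rw [Finset.mul_sum]
  -- assembly
  have hconstsum : ∀ r : ℝ, ∑ _t ∈ Finset.Icc 1 T, ∑ _i : Fin M, r = (T:ℝ)*((M:ℝ)*r) := by
    intro r
    rw [Finset.sum_const, Finset.sum_const, Nat.card_Icc, Finset.card_univ]
    simp [nsmul_eq_mul]
  have hmain : ∑ t ∈ Finset.Icc 1 T, ∑ i, (C i t (P i t) - C i t (Pstar i t))
      ≤ (T:ℝ)*((M:ℝ)*(α*φ^2)) + (T:ℝ)*((M:ℝ)*(α*ψt^2/((M:ℝ)^2*θ^2)))
        + 1/(2*α) * ∑ i, ∑ t ∈ Finset.Icc 1 T,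
            (‖Pstar i t - P i t‖^2 - ‖Pstar i t - P i (t+1)‖^2)
        + ∑ t ∈ Finset.Icc 1 T, ∑ i, ⟪lam i t, Gt i t (Pstar i t) - Gt i t (P i t)⟫ := by
    have hsum := Finset.sum_le_sum (fun t ht => Finset.sum_le_sum
      (fun (i : Fin M) (_ : i ∈ Finset.univ) => keyit t ht i))
    refine le_trans hsum (le_of_eq ?_)
    rw [show ∀ (f g : ℕ → Fin M → ℝ),
        (∑ t ∈ Finset.Icc 1 T, ∑ i, (α*φ^2 + α*ψt^2/((M:ℝ)^2*θ^2) + f t i + g t i))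
        = (∑ _t ∈ Finset.Icc 1 T, ∑ _i : Fin M, (α*φ^2))
          + (∑ _t ∈ Finset.Icc 1 T, ∑ _i : Fin M, (α*ψt^2/((M:ℝ)^2*θ^2)))
          + (∑ t ∈ Finset.Icc 1 T, ∑ i, f t i)
          + (∑ t ∈ Finset.Icc 1 T, ∑ i, g t i) from ?_]
    · rw [hconstsum, hconstsum]
      have hswap : ∑ t ∈ Finset.Icc 1 T, ∑ i : Fin M,
            1/(2*α) * (‖Pstar i t - P i t‖^2 - ‖Pstar i t - P i (t+1)‖^2)
          = 1/(2*α) * ∑ i : Fin M, ∑ t ∈ Finset.Icc 1 T,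
            (‖Pstar i t - P i t‖^2 - ‖Pstar i t - P i (t+1)‖^2) := by
        rw [Finset.mul_sum]
        rw [Finset.sum_comm]
        refine Finset.sum_congr rfl fun i _ => ?_
        rw [Finset.mul_sum]
      rw [hswap]
    · intro f g
      simp only [Finset.sum_add_distrib]
  have hteleall : ∑ i : Fin M, ∑ t ∈ Finset.Icc 1 T,
        (‖Pstar i t - P i t‖^2 - ‖Pstar i t - P i (t+1)‖^2)
      ≤ 2*R*(∑ i : Fin M, ∑ t ∈ Finset.Icc 1 T, ‖Pstar i t - Pstar i (t-1)‖)
        + ∑ i, ‖P i 1 - Pstar i 0‖^2 := by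
    calc ∑ i : Fin M, ∑ t ∈ Finset.Icc 1 T,
          (‖Pstar i t - P i t‖^2 - ‖Pstar i t - P i (t+1)‖^2)
        ≤ ∑ i : Fin M, (2*R*(∑ t ∈ Finset.Icc 1 T, ‖Pstar i t - Pstar i (t-1)‖)
            + ‖P i 1 - Pstar i 0‖^2) := Finset.sum_le_sum fun i _ => htele i
      _ = _ := by
          rw [Finset.sum_add_distrib, Finset.mul_sum]
  have hpathswap : ∑ i : Fin M, ∑ t ∈ Finset.Icc 1 T, ‖Pstar i t - Pstar i (t-1)‖
      = ∑ t ∈ Finset.Icc 1 T, ∑ i, ‖Pstar i t - Pstar i (t-1)‖ := Finset.sum_comm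
  have h2a : (0:ℝ) ≤ 1/(2*α) := by positivity
  have hfactor : 1/(2*α) * (2*R*(∑ t ∈ Finset.Icc 1 T, ∑ i, ‖Pstar i t - Pstar i (t-1)‖)
        + ∑ i, ‖P i 1 - Pstar i 0‖^2)
      = (R/α) * (∑ t ∈ Finset.Icc 1 T, ∑ i, ‖Pstar i t - Pstar i (t-1)‖)
        + (1/(2*α)) * ∑ i, ‖P i 1 - Pstar i 0‖^2 := by
    field_simp
  have hconst1 : (T:ℝ)*((M:ℝ)*(α*φ^2)) = φ^2*(M:ℝ)*α*(T:ℝ) := by ring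
  have hconst2 : (T:ℝ)*((M:ℝ)*(α*ψt^2/((M:ℝ)^2*θ^2))) = (ψt^2/(M:ℝ))*α*(T:ℝ)/θ^2 := by
    field_simp
  have htele' : 1/(2*α) * ∑ i : Fin M, ∑ t ∈ Finset.Icc 1 T,
        (‖Pstar i t - P i t‖^2 - ‖Pstar i t - P i (t+1)‖^2)
      ≤ (R/α) * (∑ t ∈ Finset.Icc 1 T, ∑ i, ‖Pstar i t - Pstar i (t-1)‖)
        + (1/(2*α)) * ∑ i, ‖P i 1 - Pstar i 0‖^2 := by
    rw [← hfactor]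
    refine le_trans (mul_le_mul_of_nonneg_left ?_ h2a) (le_of_eq rfl)
    rw [← hpathswap]
    exact hteleall
  calc ∑ t ∈ Finset.Icc 1 T, ∑ i, (C i t (P i t) - C i t (Pstar i t))
      ≤ (T:ℝ)*((M:ℝ)*(α*φ^2)) + (T:ℝ)*((M:ℝ)*(α*ψt^2/((M:ℝ)^2*θ^2)))
        + 1/(2*α) * ∑ i, ∑ t ∈ Finset.Icc 1 T,
            (‖Pstar i t - P i t‖^2 - ‖Pstar i t - P i (t+1)‖^2)
        + ∑ t ∈ Finset.Icc 1 T, ∑ i, ⟪lam i t, Gt i t (Pstar i t) - Gt i t (P i t)⟫ := hmain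
    _ ≤ (T:ℝ)*((M:ℝ)*(α*φ^2)) + (T:ℝ)*((M:ℝ)*(α*ψt^2/((M:ℝ)^2*θ^2)))
        + ((R/α) * (∑ t ∈ Finset.Icc 1 T, ∑ i, ‖Pstar i t - Pstar i (t-1)‖)
          + (1/(2*α)) * ∑ i, ‖P i 1 - Pstar i 0‖^2)
        + (4*ψt^2*(M:ℝ)/(εt*Real.sqrt εt) + 2*ψt^2*(M:ℝ)) * β * (T:ℝ) := by
        have := add_le_add (add_le_add (le_refl ((T:ℝ)*((M:ℝ)*(α*φ^2))
          + (T:ℝ)*((M:ℝ)*(α*ψt^2/((M:ℝ)^2*θ^2))))) htele') hdualsum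
        linarith only [this]
    _ = _ := by
        rw [hconst1, hconst2]
        ring
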